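/- (Corollary 4) Let L be a finite-dimensional nilpotent left Leibniz algebra over a field k of characteristic 0. Then the minimal cardinality of a generating set of L equals dim_k(L/[L,L]): there is a generating set of this cardinality, and no generating set has smaller cardinality. -/

import Mathlib

/-
Basic notions for (left) Leibniz algebras, given by a bilinear bracket
`β : M →ₗ[k] M →ₗ[k] M` on a `k`-vector space `M`.
-/

section LeibnizDefs

variable {k : Type*} [Field k] {M : Type*} [AddCommGroup M] [Module k M]

/-- `[A, B]`: the linear span of brackets of elements of two subspaces. -/
def bracketSpan (β : M →ₗ[k] M →ₗ[k] M) (A B : Submodule k M) : Submodule k M :=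
  Submodule.span k {z : M | ∃ a ∈ A, ∃ b ∈ B, z = β a b}

/-- Derived series of a subspace `I`: `D^0 = I`, `D^{n+1} = [D^n, D^n]`. -/
def derivedSeriesOf (β : M →ₗ[k] M →ₗ[k] M) (I : Submodule k M) : ℕ → Submodule k M
  | 0 => I
  | n + 1 => bracketSpan β (derivedSeriesOf β I n) (derivedSeriesOf β I n)

/-- Lower central series of a subspace `I`: `C^0 = I`, `C^{n+1} = [I, C^n]`. -/
def lowerCentralSeriesOf (β : M →ₗ[k] M →ₗ[k] M) (I : Submodule k M) : ℕ → Submodule k M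
  | 0 => I
  | n + 1 => bracketSpan β I (lowerCentralSeriesOf β I n)

/-- A two-sided ideal. -/
def LeibnizIdeal (β : M →ₗ[k] M →ₗ[k] M) (I : Submodule k M) : Prop :=
  (∀ x : M, ∀ u ∈ I, β x u ∈ I) ∧ (∀ u ∈ I, ∀ x : M, β u x ∈ I)

/-- A subspace is solvable if its derived series reaches `0`. -/
def LeibnizSolvable (β : M →ₗ[k] M →ₗ[k] M) (I : Submodule k M) : Prop :=
  ∃ n, derivedSeriesOf β I n = ⊥

/-- A subspace is nilpotent if its lower central series reaches `0`. -/
def LeibnizNilpotent (β : M →ₗ[k] M →ₗ[k] M) (I : Submodule k M) : Prop :=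
  ∃ n, lowerCentralSeriesOf β I n = ⊥

/-- A subalgebra: a subspace closed under the bracket. -/
def LeibnizSubalgebra (β : M →ₗ[k] M →ₗ[k] M) (S : Submodule k M) : Prop :=
  ∀ u ∈ S, ∀ v ∈ S, β u v ∈ S

end LeibnizDefs

section AuxLemmas
variable {k : Type*} [Field k] {M : Type*} [AddCommGroup M] [Module k M]
variable (β : M →ₗ[k] M →ₗ[k] M)

lemma mem_bracketSpan' {A B : Submodule k M} {a b : M} (ha : a ∈ A) (hb : b ∈ B) :
    β a b ∈ bracketSpan β A B :=
  Submodule.subset_span ⟨a, ha, b, hb, rfl⟩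

lemma bracketSpan_le' {A B : Submodule k M} {C : Submodule k M}
    (h : ∀ a ∈ A, ∀ b ∈ B, β a b ∈ C) : bracketSpan β A B ≤ C := by
  apply Submodule.span_le.mpr
  rintro z ⟨a, ha, b, hb, rfl⟩
  exact h a ha b hb

lemma lcs_bracket (leib : ∀ x y z : M, β x (β y z) = β (β x y) z + β y (β x z)) :
    ∀ a b : ℕ, bracketSpan β (lowerCentralSeriesOf β ⊤ a) (lowerCentralSeriesOf β ⊤ b) ≤
      lowerCentralSeriesOf β ⊤ (a + b + 1) := by
  intro a
  induction a with
  | zero =>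
    intro b
    rw [show (0 + b + 1 : ℕ) = b + 1 by omega, lowerCentralSeriesOf]
    exact le_rfl
  | succ a ih =>
    intro b
    apply bracketSpan_le'
    intro w hw v hv
    have key : lowerCentralSeriesOf β ⊤ (a + 1) ≤
        Submodule.comap (β.flip v) (lowerCentralSeriesOf β ⊤ (a + 1 + b + 1)) := by
      rw [lowerCentralSeriesOf]
      apply Submodule.span_le.mpr
      rintro z ⟨x, -, u, hu, rfl⟩
      simp only [SetLike.mem_coe, Submodule.mem_comap, LinearMap.flip_apply]
      have h1 : β x (β u v) ∈ lowerCentralSeriesOf β ⊤ (a + 1 + b + 1) := by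
        rw [show a + 1 + b + 1 = (a + b + 1) + 1 by omega, lowerCentralSeriesOf]
        exact mem_bracketSpan' β (Submodule.mem_top) (ih b (mem_bracketSpan' β hu hv))
      have h2 : β u (β x v) ∈ lowerCentralSeriesOf β ⊤ (a + 1 + b + 1) := by
        rw [show a + 1 + b + 1 = a + (b + 1) + 1 by omega]
        refine ih (b + 1) (mem_bracketSpan' β hu ?_)
        rw [lowerCentralSeriesOf]
        exact mem_bracketSpan' β Submodule.mem_top hv
      have : β (β x u) v = β x (β u v) - β u (β x v) := by
        rw [leib x u v]; abel
      rw [this]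
      exact sub_mem h1 h2
    exact key hw




lemma lcs_one_eq : lowerCentralSeriesOf β (⊤ : Submodule k M) 1 = bracketSpan β ⊤ ⊤ := by
  rw [lowerCentralSeriesOf, lowerCentralSeriesOf]

lemma sup_lcs_eq_top (leib : ∀ x y z : M, β x (β y z) = β (β x y) z + β y (β x z))
    {S : Submodule k M} (hS : LeibnizSubalgebra β S)
    (h1 : S ⊔ lowerCentralSeriesOf β ⊤ 1 = ⊤) :
    ∀ m, S ⊔ lowerCentralSeriesOf β ⊤ (m + 1) = ⊤ := by
  intro m
  induction m with
  | zero => exact h1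
  | succ m ih =>
    have hle : lowerCentralSeriesOf β ⊤ 1 ≤ S ⊔ lowerCentralSeriesOf β ⊤ (m + 1 + 1) := by
      rw [lcs_one_eq]
      apply bracketSpan_le'
      intro a _ b hbtop
      have ha : a ∈ S ⊔ lowerCentralSeriesOf β ⊤ (m + 1) := by rw [ih]; trivial
      have hb : b ∈ S ⊔ lowerCentralSeriesOf β ⊤ (m + 1) := by rw [ih]; trivial
      obtain ⟨s, hs, u, hu, rfl⟩ := Submodule.mem_sup.mp ha
      obtain ⟨t, ht, w, hw, rfl⟩ := Submodule.mem_sup.mp hb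
      have e : β (s + u) (t + w) = β s t + (β s w + β u (t + w)) := by
        simp only [map_add, LinearMap.add_apply]; abel
      rw [e]
      have m1 : β s t ∈ S := hS s hs t ht
      have m2 : β s w ∈ lowerCentralSeriesOf β ⊤ (m + 1 + 1) := by
        rw [lowerCentralSeriesOf]
        exact mem_bracketSpan' β Submodule.mem_top hw
      have m3 : β u (t + w) ∈ lowerCentralSeriesOf β ⊤ (m + 1 + 1) := by
        have := lcs_bracket β leib (m + 1) 0
          (mem_bracketSpan' β hu (show t + w ∈ lowerCentralSeriesOf β ⊤ 0 from trivial))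
        simpa using this
      exact add_mem (Submodule.mem_sup_left m1)
        (Submodule.mem_sup_right (add_mem m2 m3))
    exact le_antisymm le_top (h1.symm.trans_le (sup_le le_sup_left hle))

lemma gen_eq_top (leib : ∀ x y z : M, β x (β y z) = β (β x y) z + β y (β x z))
    (hnil : ∃ n, lowerCentralSeriesOf β (⊤ : Submodule k M) n = ⊥)
    {S : Submodule k M} (hS : LeibnizSubalgebra β S)
    (h1 : S ⊔ bracketSpan β ⊤ ⊤ = ⊤) : S = ⊤ := by
  obtain ⟨n, hn⟩ := hnil
  cases n with
  | zero =>
    rw [lowerCentralSeriesOf] at hn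
    rw [eq_top_iff, hn]; exact bot_le
  | succ n =>
    have := sup_lcs_eq_top β leib hS (by rw [lcs_one_eq]; exact h1) n
    rw [hn, sup_bot_eq] at this
    exact this
end AuxLemmas



/-- The minimal number of generators of a nilpotent Leibniz algebra `L` is
`dim L/[L,L]`: some generating set has that cardinality, and no generating set is
smaller. -/
theorem stmt_11 {k : Type*} [Field k] [CharZero k] {L : Type*} [AddCommGroup L] [Module k L]
    [FiniteDimensional k L] (β : L →ₗ[k] L →ₗ[k] L)
    (leib : ∀ x y z : L, β x (β y z) = β (β x y) z + β y (β x z))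
    (hnil : LeibnizNilpotent β (⊤ : Submodule k L)) :
    (∃ V : Finset L, V.card = Module.finrank k (L ⧸ bracketSpan β ⊤ ⊤) ∧
      ∀ S : Submodule k L, LeibnizSubalgebra β S → (V : Set L) ⊆ (S : Set L) → S = ⊤) ∧
    ∀ W : Set L, (∀ S : Submodule k L, LeibnizSubalgebra β S → W ⊆ (S : Set L) → S = ⊤) →
      (Module.finrank k (L ⧸ bracketSpan β ⊤ ⊤) : Cardinal) ≤ Cardinal.mk W := by

  classical
  set D : Submodule k L := bracketSpan β ⊤ ⊤ with hD
  constructor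
  · -- existence of a generating set of the right size
    let bQ : Module.Basis (Fin (Module.finrank k (L ⧸ D))) k (L ⧸ D) := Module.finBasis k (L ⧸ D)
    choose f hf using fun i => Submodule.Quotient.mk_surjective D (bQ i)
    have finj : Function.Injective f := by
      intro i j hij
      apply bQ.injective
      rw [← hf i, ← hf j, hij]
    refine ⟨Finset.univ.image f, ?_, ?_⟩
    · rw [Finset.card_image_of_injective _ finj, Finset.card_univ, Fintype.card_fin]
    · intro S hS hsub
      apply gen_eq_top β leib hnil hS
      have hmap : Submodule.map D.mkQ (Submodule.span k (Set.range f)) = ⊤ := by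
        rw [Submodule.map_span, ← Set.range_comp]
        have hfc : (D.mkQ ∘ f) = bQ :=
          funext fun i => (Submodule.mkQ_apply D (f i)).trans (hf i)
        rw [hfc, Module.Basis.span_eq]
      have hspan : Submodule.span k (Set.range f) ⊔ D = ⊤ := by
        have := congrArg (Submodule.comap D.mkQ) hmap
        rwa [Submodule.comap_map_eq, Submodule.ker_mkQ, Submodule.comap_top] at this
      have hfS : Submodule.span k (Set.range f) ≤ S := by
        rw [Submodule.span_le]
        rintro x ⟨i, rfl⟩
        exact hsub (by simp)
      exact eq_top_iff.mpr (le_trans hspan.ge (sup_le_sup_right hfS D))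
  · -- lower bound
    intro W hW
    have hS : LeibnizSubalgebra β (Submodule.span k W ⊔ D) := by
      intro u _ v _
      exact Submodule.mem_sup_right (mem_bracketSpan' β trivial trivial)
    have htop : Submodule.span k W ⊔ D = ⊤ :=
      hW _ hS fun x hx => Submodule.mem_sup_left (Submodule.subset_span hx)
    have hDbot : Submodule.map D.mkQ D = ⊥ := by
      rw [eq_bot_iff, Submodule.map_le_iff_le_comap]
      exact le_of_eq (Submodule.ker_mkQ D).symm
    have hmap : Submodule.span k (D.mkQ '' W) = ⊤ := by
      have := congrArg (Submodule.map D.mkQ) htop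
      rwa [Submodule.map_sup, Submodule.map_span, hDbot, sup_bot_eq,
        Submodule.map_top, Submodule.range_mkQ] at this
    have hrank : Module.rank k (L ⧸ D) ≤ Cardinal.mk (D.mkQ '' W) := by
      calc Module.rank k (L ⧸ D)
          = Module.rank k ↥(⊤ : Submodule k (L ⧸ D)) := (rank_top k _).symm
        _ = Module.rank k ↥(Submodule.span k (D.mkQ '' W)) := by rw [hmap]
        _ ≤ Cardinal.mk (D.mkQ '' W) := rank_span_le _
    rw [Module.finrank_eq_rank k (L ⧸ D)]
    exact le_trans hrank Cardinal.mk_image_le
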